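/- Let H be a linearly ordered abelian group and β : H × H → ℤ a normalized symmetric 2-cocycle. Equip ℚ_p with its p-adic additive valuation v_p (with value group ℤ) and the cross-section σ(m) = p^m. Then the twisted Hahn series field ℚ_p(t^H,β), with valuation val(f) = (v_p(f.coeff h₀), h₀) for h₀ = min supp(f) and values in ℤ × H ordered by (z,h) ≤ (z',h') iff h < h' or (h = h' and z ≤ z'), is an ω-pseudo complete valued field. -/

import Mathlib

/-- Twisted multiplication on Hahn series. -/
noncomputable def tmul {K H A : Type*} [Field K]
    [AddCommGroup H] [LinearOrder H] [IsOrderedAddMonoid H] [AddCommGroup A]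
    (σ : A → Kˣ) (β : H → H → A) (x y : HahnSeries H K) : HahnSeries H K where
  coeff l := ∑ ij ∈ Finset.addAntidiagonal x.isPWO_support y.isPWO_support l,
      x.coeff ij.1 * y.coeff ij.2 * (σ (-β ij.1 ij.2) : K)
  isPWO_support' := by
    refine Set.IsPWO.mono (x.isPWO_support.add y.isPWO_support) ?_
    intro l hl
    obtain ⟨ij, hij, -⟩ :=
      Finset.exists_ne_zero_of_sum_ne_zero (Function.mem_support.mp hl)
    rw [Finset.addAntidiagonal, Finset.mem_antidiagonal] at hij
    exact Set.mem_add.mpr ⟨ij.1, hij.1, ij.2, hij.2.1, hij.2.2⟩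

/-- The minimum of the support of a nonzero Hahn series. -/
noncomputable def minSupp {K H : Type*} [Field K] [AddCommGroup H] [LinearOrder H] [IsOrderedAddMonoid H]
    (f : HahnSeries H K) (hf : f ≠ 0) : H :=
  f.isWF_support.min (HahnSeries.support_nonempty_iff.mpr hf)

/-- The valuation `val f = (v (f.coeff h₀), h₀)`, `h₀ = min supp f`. -/
noncomputable def tval {K H A : Type*} [Field K] [AddCommGroup H] [LinearOrder H] [IsOrderedAddMonoid H]
    [AddCommGroup A] [LinearOrder A] [IsOrderedAddMonoid A]
    (v : K → WithTop A) (f : HahnSeries H K) (hf : f ≠ 0) : WithTop A × H :=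
  (v (f.coeff (minSupp f hf)), minSupp f hf)

/-- The strict order `(z,h) < (z',h') ↔ h < h' ∨ (h = h' ∧ z < z')` on values. -/
def pLt {A H : Type*} [AddCommGroup A] [LinearOrder A] [IsOrderedAddMonoid A] [AddCommGroup H] [LinearOrder H] [IsOrderedAddMonoid H]
    (p q : WithTop A × H) : Prop :=
  p.2 < q.2 ∨ (p.2 = q.2 ∧ p.1 < q.1)

open Classical in
/-- The valuation extended by `val 0 = ∞`. -/
noncomputable def Val {K H A : Type*} [Field K] [AddCommGroup H] [LinearOrder H] [IsOrderedAddMonoid H]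
    [AddCommGroup A] [LinearOrder A] [IsOrderedAddMonoid A]
    (v : K → WithTop A) (f : HahnSeries H K) : WithTop (WithTop A × H) :=
  if hf : f = 0 then ⊤ else ((tval v f hf : WithTop A × H) : WithTop (WithTop A × H))

/-- Extension of a strict order to `WithTop`, with `⊤` the largest element. -/
def vLt {P : Type*} (lt : P → P → Prop) (x y : WithTop P) : Prop :=
  x ≠ ⊤ ∧ (y = ⊤ ∨ ∃ p q : P, x = (p : WithTop P) ∧ y = (q : WithTop P) ∧ lt p q)

open Classical in
/-- The additive `p`-adic valuation `v_p : ℚ_p → ℤ ∪ {∞}`. -/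
noncomputable def padicVal (p : ℕ) [Fact p.Prime] : ℚ_[p] → WithTop ℤ :=
  fun x => if x = 0 then ⊤ else ((x.valuation : ℤ) : WithTop ℤ)

/-- The cross-section `σ : ℤ → ℚ_pˣ`, `σ m = p^m`. -/
noncomputable def padicSection (p : ℕ) [Fact p.Prime] : ℤ → (ℚ_[p])ˣ :=
  fun m => (Units.mk0 ((p : ℚ_[p]))
    (Nat.cast_ne_zero.mpr (Fact.out : p.Prime).ne_zero)) ^ m


section AuxLemmas

variable {p : ℕ} [Fact p.Prime] {H : Type*} [AddCommGroup H] [LinearOrder H] [IsOrderedAddMonoid H]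

lemma aux_one_lt_p (p : ℕ) [Fact p.Prime] : (1 : ℝ) < p := by
  exact_mod_cast (Fact.out : p.Prime).one_lt

lemma padicVal_eq_top_iff {x : ℚ_[p]} : padicVal p x = ⊤ ↔ x = 0 := by
  unfold padicVal; split_ifs with h <;> simp [h]

lemma padicVal_coe {x : ℚ_[p]} (hx : x ≠ 0) :
    padicVal p x = ((x.valuation : ℤ) : WithTop ℤ) := by
  unfold padicVal; rw [if_neg hx]

lemma padic_val_eq_of_norm_eq_pow {x : ℚ_[p]} (hx : x ≠ 0) {m : ℤ}
    (h : ‖x‖ = (p : ℝ) ^ (-m)) : x.valuation = m := by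
  have hp : (1 : ℝ) < p := aux_one_lt_p p
  rw [Padic.norm_eq_zpow_neg_valuation hx] at h
  have h2 : -x.valuation = -m :=
    zpow_right_injective₀ (lt_trans zero_lt_one hp) (ne_of_gt hp) h
  omega

lemma padicVal_add_of_lt {x y : ℚ_[p]} (h : padicVal p x < padicVal p y) :
    padicVal p (x + y) = padicVal p x := by
  have hp : (1 : ℝ) < p := aux_one_lt_p p
  have hx : x ≠ 0 := by
    intro h0
    rw [padicVal_eq_top_iff.mpr h0] at h
    exact (not_top_lt h)
  by_cases hy : y = 0
  · simp [hy]
  rw [padicVal_coe hx, padicVal_coe hy, WithTop.coe_lt_coe] at h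
  have hnorm : ‖y‖ < ‖x‖ := by
    rw [Padic.norm_eq_zpow_neg_valuation hx, Padic.norm_eq_zpow_neg_valuation hy]
    exact zpow_lt_zpow_right₀ hp (by omega)
  have hmax : ‖x + y‖ = ‖x‖ := by
    rw [Padic.add_eq_max_of_ne (ne_of_gt hnorm), max_eq_left hnorm.le]
  have hxy : x + y ≠ 0 := by
    intro h0
    rw [h0, norm_zero] at hmax
    exact hx (norm_eq_zero.mp hmax.symm)
  rw [padicVal_coe hxy, padicVal_coe hx, WithTop.coe_inj]
  exact padic_val_eq_of_norm_eq_pow hxy (by rw [hmax, Padic.norm_eq_zpow_neg_valuation hx])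

lemma minSupp_coeff_ne {f : HahnSeries H ℚ_[p]} (hf : f ≠ 0) :
    f.coeff (minSupp f hf) ≠ 0 := by
  have := f.isWF_support.min_mem (HahnSeries.support_nonempty_iff.mpr hf)
  rwa [HahnSeries.mem_support] at this

lemma coeff_eq_zero_of_lt_minSupp {f : HahnSeries H ℚ_[p]} (hf : f ≠ 0) {h : H}
    (hlt : h < minSupp f hf) : f.coeff h = 0 := by
  by_contra h0
  exact f.isWF_support.not_lt_min _ ((HahnSeries.mem_support f h).mpr h0) hlt

lemma minSupp_eq {f : HahnSeries H ℚ_[p]} (hf : f ≠ 0) {h0 : H}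
    (hlow : ∀ h, h < h0 → f.coeff h = 0) (hne : f.coeff h0 ≠ 0) :
    minSupp f hf = h0 := by
  have h1 : minSupp f hf ≤ h0 :=
    Set.IsWF.min_le _ _ ((HahnSeries.mem_support f h0).mpr hne)
  have h2 : ¬ minSupp f hf < h0 := fun hlt => minSupp_coeff_ne hf (hlow _ hlt)
  exact le_antisymm h1 (not_lt.1 h2)

lemma minSupp_congr {f g : HahnSeries H ℚ_[p]} (h : f = g) (hf : f ≠ 0)
    (hg : g ≠ 0) : minSupp f hf = minSupp g hg := by
  subst h; rfl

lemma vLt_coe_iff {P : Type*} (lt : P → P → Prop) (a b : P) :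
    vLt lt (a : WithTop P) (b : WithTop P) ↔ lt a b := by
  constructor
  · rintro ⟨-, h | ⟨x, y, hx, hy, hxy⟩⟩
    · exact absurd h WithTop.coe_ne_top
    · rw [WithTop.coe_inj] at hx hy
      rw [hx, hy]; exact hxy
  · intro h
    exact ⟨WithTop.coe_ne_top, Or.inr ⟨a, b, rfl, rfl, h⟩⟩

lemma tval_add {f g : HahnSeries H ℚ_[p]} (hf : f ≠ 0) (hg : g ≠ 0)
    (hlt : pLt (tval (padicVal p) f hf) (tval (padicVal p) g hg)) :
    ∃ hfg : f + g ≠ 0, minSupp (f + g) hfg = minSupp f hf ∧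
      padicVal p ((f + g).coeff (minSupp f hf)) = padicVal p (f.coeff (minSupp f hf)) := by
  simp only [pLt, tval] at hlt
  have hle : minSupp f hf ≤ minSupp g hg := by
    rcases hlt with h | ⟨h, -⟩
    · exact le_of_lt h
    · exact le_of_eq h
  have hcoeff : padicVal p ((f + g).coeff (minSupp f hf))
      = padicVal p (f.coeff (minSupp f hf)) := by
    rcases hlt with h | ⟨heq, hv⟩
    · rw [HahnSeries.coeff_add, coeff_eq_zero_of_lt_minSupp hg h, add_zero]
    · rw [← heq] at hv
      rw [HahnSeries.coeff_add]
      exact padicVal_add_of_lt hv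
  have hne0 : (f + g).coeff (minSupp f hf) ≠ 0 := by
    intro h0
    rw [h0, padicVal_eq_top_iff.mpr rfl] at hcoeff
    exact minSupp_coeff_ne hf (padicVal_eq_top_iff.mp hcoeff.symm)
  have hfg : f + g ≠ 0 := fun h0 => hne0 (by rw [h0, HahnSeries.coeff_zero])
  have hlow : ∀ h, h < minSupp f hf → (f + g).coeff h = 0 := by
    intro h hlth
    rw [HahnSeries.coeff_add, coeff_eq_zero_of_lt_minSupp hf hlth,
      coeff_eq_zero_of_lt_minSupp hg (lt_of_lt_of_le hlth hle), add_zero]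
  exact ⟨hfg, minSupp_eq hfg hlow hne0, hcoeff⟩

end AuxLemmas

/-- For a linearly ordered abelian group `H` and a normalized
symmetric 2-cocycle `β : H × H → ℤ`, the twisted Hahn series field
`ℚ_p(t^H, β)` (with cross-section `σ m = p^m` and the valuation
`val f = (v_p (f.coeff h₀), h₀)`, `h₀ = min supp f`, valued in `ℤ × H` with the
order `(z,h) ≤ (z',h') ↔ h < h' ∨ (h = h' ∧ z ≤ z')`) is an ω-pseudo complete
valued field. -/
theorem padic_twisted_hahn_series_pseudo_complete
    (p : ℕ) [Fact p.Prime]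
    {H : Type*} [AddCommGroup H] [LinearOrder H] [IsOrderedAddMonoid H]
    (β : H → H → ℤ)
    (hβsymm : ∀ h h' : H, β h h' = β h' h)
    (hβnorm : ∀ h : H, β h 0 = 0 ∧ β 0 h = 0)
    (hβcoc : ∀ h h' h'' : H, β h h' + β (h + h') h'' = β h' h'' + β h (h' + h'')) :
    ∀ c : ℕ → HahnSeries H ℚ_[p],
      (∃ N : ℕ, ∀ i j k : ℕ, N ≤ i → i < j → j < k →
        vLt pLt (Val (padicVal p) (c j - c i)) (Val (padicVal p) (c k - c j))) →
      ∃ b : HahnSeries H ℚ_[p], ∃ N : ℕ, ∀ i j : ℕ, N ≤ i → i < j →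
        vLt pLt (Val (padicVal p) (b - c i)) (Val (padicVal p) (b - c j)) := by
    classical
  rintro c ⟨N, Hc⟩
  -- nonvanishing of differences
  have hne : ∀ i j : ℕ, N ≤ i → i < j → c j - c i ≠ 0 := by
    intro i j hi hij h0
    have h1 := (Hc i j (j + 1) hi hij (Nat.lt_succ_self j)).1
    exact h1 (by simp [Val, h0])
  have hd : ∀ i, N ≤ i → c (i + 1) - c i ≠ 0 := fun i hi =>
    hne i (i + 1) hi (Nat.lt_succ_self i)
  have hVal : ∀ (f : HahnSeries H ℚ_[p]) (hf : f ≠ 0),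
      Val (padicVal p) f = ((tval (padicVal p) f hf : WithTop ℤ × H) :
        WithTop (WithTop ℤ × H)) := by
    intro f hf; simp [Val, hf]
  -- the invariants of the successive differences
  set hh : ℕ → H := fun i =>
    if hdi : c (i + 1) - c i = 0 then 0 else minSupp _ hdi with hhh
  have hhdef : ∀ i (hi : N ≤ i), hh i = minSupp (c (i + 1) - c i) (hd i hi) := by
    intro i hi; simp [hhh, hd i hi]
  set γ : ℕ → WithTop ℤ × H := fun i =>
    (padicVal p ((c (i + 1) - c i).coeff (hh i)), hh i) with hγ
  have hγcoeff : ∀ i, N ≤ i → (c (i + 1) - c i).coeff (hh i) ≠ 0 := by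
    intro i hi; rw [hhdef i hi]; exact minSupp_coeff_ne _
  have htvald : ∀ i (hi : N ≤ i),
      tval (padicVal p) (c (i + 1) - c i) (hd i hi) = γ i := by
    intro i hi
    simp only [tval, hγ]
    rw [← hhdef i hi]
  -- L1 : value of an arbitrary difference
  have L1 : ∀ i j, N ≤ i → i < j → ∃ hij : c j - c i ≠ 0,
      minSupp (c j - c i) hij = hh i ∧
      padicVal p ((c j - c i).coeff (hh i))
        = padicVal p ((c (i + 1) - c i).coeff (hh i)) := by
    intro i j hi hij
    induction j, hij using Nat.le_induction with
    | base => exact ⟨hd i hi, (hhdef i hi).symm, rfl⟩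
    | succ j hij ih =>
      obtain ⟨hji, hmin, hval⟩ := ih
      have hNj : N ≤ j := le_trans hi (Nat.le_of_lt_succ (Nat.lt_succ_of_lt hij))
      have h1 := Hc i j (j + 1) hi hij (Nat.lt_succ_self j)
      rw [hVal _ hji, hVal _ (hd j hNj), vLt_coe_iff] at h1
      have hkey : (c j - c i) + (c (j + 1) - c j) = c (j + 1) - c i := by abel
      obtain ⟨hfg, hmin2, hval2⟩ := tval_add hji (hd j hNj) h1
      have hfg' : c (j + 1) - c i ≠ 0 := by rw [← hkey]; exact hfg
      refine ⟨hfg', ?_, ?_⟩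
      · rw [minSupp_congr hkey.symm hfg' hfg, hmin2, hmin]
      · rw [hmin] at hval2
        rw [← hkey, hval2, hval]
  -- monotonicity of γ
  have mono : ∀ i j, N ≤ i → i < j → pLt (γ i) (γ j) := by
    intro i j hi hij
    have hNj : N ≤ j := le_trans hi hij.le
    obtain ⟨hji, hmin, hval⟩ := L1 i j hi hij
    have htv : tval (padicVal p) (c j - c i) hji = γ i := by
      simp only [tval, hγ, hmin, hval]
    have h1 := Hc i j (j + 1) hi hij (Nat.lt_succ_self j)
    rw [hVal _ hji, hVal _ (hd j hNj), vLt_coe_iff, htv, htvald j hNj] at h1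
    exact h1
  have monoH : ∀ i j, N ≤ i → i < j → hh i ≤ hh j := by
    intro i j hi hij
    rcases mono i j hi hij with h | ⟨h, -⟩
    · exact le_of_lt h
    · exact le_of_eq h
  -- stabilization of coefficients
  have stab : ∀ i j (h : H), N ≤ i → i < j → h < hh i →
      (c j).coeff h = (c i).coeff h := by
    intro i j h hi hij hlt
    obtain ⟨hji, hmin, -⟩ := L1 i j hi hij
    have h0 : (c j - c i).coeff h = 0 :=
      coeff_eq_zero_of_lt_minSupp hji (by rw [hmin]; exact hlt)
    rw [HahnSeries.coeff_sub] at h0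
    exact sub_eq_zero.mp h0
  by_cases hcase : ∃ M, N ≤ M ∧ ∀ j, M < j → hh j = hh M
  · -- Case A : the support minimum stabilizes at hh M
    obtain ⟨M, hM, hconst⟩ := hcase
    have hp1 : (1 : ℝ) < p := aux_one_lt_p p
    have hp0 : (0 : ℝ) < p := lt_trans zero_lt_one hp1
    set h' := hh M with hh'
    set a : ℕ → ℚ_[p] := fun n => (c (M + 1 + n)).coeff h' with ha
    set ζ : ℕ → ℤ := fun n =>
      ((c (M + 1 + n + 1) - c (M + 1 + n)).coeff (hh (M + 1 + n))).valuation with hζ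
    have hidx : ∀ n : ℕ, N ≤ M + 1 + n := fun n => le_trans hM (by omega)
    have hhM : ∀ n : ℕ, hh (M + 1 + n) = h' := fun n => hconst _ (by omega)
    have hγval : ∀ n : ℕ, padicVal p
        ((c (M + 1 + n + 1) - c (M + 1 + n)).coeff (hh (M + 1 + n)))
        = ((ζ n : ℤ) : WithTop ℤ) := fun n =>
      padicVal_coe (hγcoeff _ (hidx n))
    have hdval : ∀ n m, n < m → (a m - a n) ≠ 0 ∧ (a m - a n).valuation = ζ n := by
      intro n m hnm
      obtain ⟨hne', hmin', hval'⟩ := L1 (M + 1 + n) (M + 1 + m) (hidx n) (by omega)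
      have hdiff : a m - a n = (c (M + 1 + m) - c (M + 1 + n)).coeff (hh (M + 1 + n)) := by
        rw [HahnSeries.coeff_sub, hhM n]
      rw [← hdiff] at hval'
      rw [hγval n] at hval'
      have hne0 : a m - a n ≠ 0 := by
        intro h0
        rw [h0, padicVal_eq_top_iff.mpr rfl] at hval'
        exact WithTop.top_ne_coe hval'
      refine ⟨hne0, ?_⟩
      rw [padicVal_coe hne0] at hval'
      exact_mod_cast hval'
    have hdnorm : ∀ n m, n < m → ‖a m - a n‖ = (p : ℝ) ^ (-(ζ n)) := by
      intro n m hnm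
      rw [Padic.norm_eq_zpow_neg_valuation (hdval n m hnm).1, (hdval n m hnm).2]
    have hζmono : ∀ n m, n < m → ζ n < ζ m := by
      intro n m hnm
      rcases mono (M + 1 + n) (M + 1 + m) (hidx n) (by omega) with hlt | ⟨-, hlt⟩
      · exfalso
        simp only [hγ, hhM] at hlt
        exact lt_irrefl _ hlt
      · simp only [hγ] at hlt
        rw [hγval n, hγval m, WithTop.coe_lt_coe] at hlt
        exact hlt
    have hζgrow : ∀ n : ℕ, ζ 0 + n ≤ ζ n := by
      intro n
      induction n with
      | zero => simp
      | succ n ih =>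
        have := hζmono n (n + 1) (Nat.lt_succ_self n)
        omega
    have hcau : CauchySeq a := by
      apply cauchySeq_of_le_geometric ((p : ℝ)⁻¹) ((p : ℝ) ^ (-(ζ 0)))
        (inv_lt_one_of_one_lt₀ hp1)
      intro n
      rw [dist_eq_norm, norm_sub_rev, hdnorm n (n + 1) (Nat.lt_succ_self n)]
      calc (p : ℝ) ^ (-(ζ n)) ≤ (p : ℝ) ^ (-(ζ 0 + (n : ℤ))) := by
            apply zpow_le_zpow_right₀ hp1.le
            have := hζgrow n
            omega
        _ = (p : ℝ) ^ (-(ζ 0)) * ((p : ℝ)⁻¹) ^ n := by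
            rw [neg_add, zpow_add₀ (ne_of_gt hp0)]
            congr 1
            rw [zpow_neg, zpow_natCast, ← inv_pow]
    obtain ⟨L, hL⟩ := cauchySeq_tendsto_of_complete hcau
    have hLnorm : ∀ n, ‖L - a n‖ = (p : ℝ) ^ (-(ζ n)) := by
      intro n
      have t1 : Filter.Tendsto (fun m => ‖a m - a n‖) Filter.atTop (nhds ‖L - a n‖) :=
        (hL.sub tendsto_const_nhds).norm
      have t2 : Filter.Tendsto (fun m => ‖a m - a n‖) Filter.atTop
          (nhds ((p : ℝ) ^ (-(ζ n)))) := by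
        apply Filter.Tendsto.congr' _ tendsto_const_nhds
        filter_upwards [Filter.eventually_ge_atTop (n + 1)] with m hm
        exact (hdnorm n m (by omega)).symm
      exact tendsto_nhds_unique t1 t2
    have hLa : ∀ n, L - a n ≠ 0 := by
      intro n h0
      have := hLnorm n
      rw [h0, norm_zero] at this
      exact (ne_of_gt (zpow_pos hp0 _)) this.symm
    have hLaval : ∀ n, (L - a n).valuation = ζ n := fun n =>
      padic_val_eq_of_norm_eq_pow (hLa n) (hLnorm n)
    -- the pseudo-limit
    set F : H → ℚ_[p] := fun h =>
      if h < h' then (c (M + 1)).coeff h else if h = h' then L else 0 with hF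
    have hFsupp : (Function.support F).IsPWO := by
      apply Set.IsPWO.mono ((c (M + 1)).isPWO_support.union
        ((Set.finite_singleton h').isPWO))
      intro h hmem
      rw [Function.mem_support] at hmem
      by_cases h1 : h < h'
      · left
        rw [hF] at hmem
        simp only [if_pos h1] at hmem
        exact hmem
      · right
        by_contra h2
        apply hmem
        rw [hF]
        simp only [if_neg h1]
        rw [if_neg (by simpa using h2)]
    set b : HahnSeries H ℚ_[p] := ⟨F, hFsupp⟩ with hb
    refine ⟨b, M + 1, ?_⟩
    have claim : ∀ i, M + 1 ≤ i → ∃ hbi : b - c i ≠ 0,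
        tval (padicVal p) (b - c i) hbi = γ i := by
      intro i hi
      have hNi : N ≤ i := le_trans hM (by omega)
      have hi' : i = M + 1 + (i - (M + 1)) := by omega
      set n := i - (M + 1) with hn
      have hhi : hh i = h' := hconst i (by omega)
      have hcoeffh' : (b - c i).coeff h' = L - a n := by
        rw [HahnSeries.coeff_sub]
        have hbc : b.coeff h' = L := by
          show F h' = L
          rw [hF]
          simp
        rw [hbc]
        have han : a n = (c i).coeff h' := by
          show (c (M + 1 + n)).coeff h' = (c i).coeff h'
          rw [← hi']
        rw [han]
      have hne0 : (b - c i).coeff h' ≠ 0 := by rw [hcoeffh']; exact hLa n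
      have hlow : ∀ h, h < h' → (b - c i).coeff h = 0 := by
        intro h hlt
        rw [HahnSeries.coeff_sub]
        have hbc : b.coeff h = (c (M + 1)).coeff h := by
          show F h = _
          rw [hF]; simp [if_pos hlt]
        rw [hbc]
        rcases eq_or_lt_of_le hi with heq | hgt
        · rw [← heq, sub_self]
        · rw [stab (M + 1) i h (le_trans hM (Nat.le_succ M)) hgt
            (by rw [hconst (M + 1) (Nat.lt_succ_self M)]; exact hlt), sub_self]
      have hbne : b - c i ≠ 0 := fun h0 => hne0 (by rw [h0, HahnSeries.coeff_zero])
      have hmin : minSupp (b - c i) hbne = h' := minSupp_eq hbne hlow hne0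
      refine ⟨hbne, ?_⟩
      simp only [tval, hγ, hmin, hhi]
      congr 1
      rw [hcoeffh', padicVal_coe (hLa n), hLaval n]
      rw [hi', ← hhM n]
      exact (hγval n).symm
    intro i j hi hij
    obtain ⟨hbi, hti⟩ := claim i hi
    obtain ⟨hbj, htj⟩ := claim j (le_trans hi hij.le)
    rw [hVal _ hbi, hVal _ hbj, hti, htj, vLt_coe_iff]
    exact mono i j (le_trans hM (by omega)) hij
  · -- Case B : the support minimum grows cofinally
    push_neg at hcase
    have hgrow : ∀ M, N ≤ M → ∃ j, M < j ∧ hh M < hh j := by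
      intro M hM
      obtain ⟨j, hMj, hnej⟩ := hcase M hM
      exact ⟨j, hMj, lt_of_le_of_ne (monoH M j hM hMj) (Ne.symm hnej)⟩
    set F : H → ℚ_[p] := fun h =>
      if hex : ∃ i, N ≤ i ∧ h < hh i then (c (Classical.choose hex)).coeff h else 0
      with hFdef
    have welldef : ∀ (h : H) (hex : ∃ i, N ≤ i ∧ h < hh i) (i : ℕ),
        N ≤ i → h < hh i → (c (Classical.choose hex)).coeff h = (c i).coeff h := by
      intro h hex i hi hlt
      obtain ⟨hi0, hlt0⟩ := Classical.choose_spec hex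
      rcases lt_trichotomy (Classical.choose hex) i with hlt' | heq | hgt'
      · exact (stab _ i h hi0 hlt' hlt0).symm
      · rw [heq]
      · exact stab i _ h hi hgt' hlt
    have hFeq : ∀ (h : H) (i : ℕ), N ≤ i → h < hh i → F h = (c i).coeff h := by
      intro h i hi hlt
      have hex : ∃ i, N ≤ i ∧ h < hh i := ⟨i, hi, hlt⟩
      rw [hFdef]
      simp only [dif_pos hex]
      exact welldef h hex i hi hlt
    have hFsupp : (Function.support F).IsPWO := by
      apply Set.IsWF.isPWO
      rw [Set.isWF_iff_no_descending_seq]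
      intro u hu hmem
      have h0 : F (u 0) ≠ 0 := hmem 0
      have hex0 : ∃ i, N ≤ i ∧ u 0 < hh i := by
        by_contra hno
        apply h0
        rw [hFdef]
        simp only [dif_neg hno]
      obtain ⟨i0, hi0, hlt0⟩ := hex0
      have hmem' : ∀ n, u n ∈ (c i0).support := by
        intro n
        have hun : u n < hh i0 :=
          lt_of_le_of_lt (hu.antitone (Nat.zero_le n)) hlt0
        have : F (u n) = (c i0).coeff (u n) := hFeq (u n) i0 hi0 hun
        have hFn : F (u n) ≠ 0 := hmem n
        rw [this] at hFn
        exact (HahnSeries.mem_support _ _).mpr hFn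
      exact Set.isWF_iff_no_descending_seq.mp (c i0).isWF_support u hu hmem'
    set b : HahnSeries H ℚ_[p] := ⟨F, hFsupp⟩ with hb
    refine ⟨b, N, ?_⟩
    have claim : ∀ j, N ≤ j → ∃ hbj : b - c j ≠ 0,
        tval (padicVal p) (b - c j) hbj = γ j := by
      intro j hj
      obtain ⟨k, hjk, hhk⟩ := hgrow j hj
      have hNk : N ≤ k := le_trans hj hjk.le
      have hcoeff : (b - c j).coeff (hh j) = (c k - c j).coeff (hh j) := by
        rw [HahnSeries.coeff_sub, HahnSeries.coeff_sub]
        congr 1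
        exact hFeq (hh j) k hNk hhk
      obtain ⟨hkj, hminkj, hvalkj⟩ := L1 j k hj hjk
      have hne0 : (b - c j).coeff (hh j) ≠ 0 := by
        rw [hcoeff, ← hminkj]
        exact minSupp_coeff_ne hkj
      have hlow : ∀ h, h < hh j → (b - c j).coeff h = 0 := by
        intro h hlt
        rw [HahnSeries.coeff_sub]
        show F h - (c j).coeff h = 0
        rw [hFeq h j hj hlt, sub_self]
      have hbne : b - c j ≠ 0 := fun h0 => hne0 (by rw [h0, HahnSeries.coeff_zero])
      have hmin : minSupp (b - c j) hbne = hh j := minSupp_eq hbne hlow hne0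
      refine ⟨hbne, ?_⟩
      simp only [tval, hγ, hmin]
      congr 1
      rw [hcoeff, hvalkj]
    intro i j hi hij
    obtain ⟨hbi, hti⟩ := claim i hi
    obtain ⟨hbj, htj⟩ := claim j (le_trans hi hij.le)
    rw [hVal _ hbi, hVal _ hbj, hti, htj, vLt_coe_iff]
    exact mono i j hi hij
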